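/- arXiv:2411.04621 — 4 statements merged into one kernel-verified Lean document; each statement's English description precedes it below -/
import Mathlib

section
/- Let V be a complex inner product space of dimension n ≥ 3, let R be a Kähler curvature-type tensor on V, and let φ ∈ ℝ. Assume that for every complex 3-dimensional subspace Σ ⊆ V, every orthonormal basis (E_1,E_2,E_3) of Σ, and every unit vector v ∈ Σ one has Σ_{j=1}^3 R(v,v̄,E_j,Ē_j) − R(v,v̄,v,v̄) ≥ φ. Then for every orthonormal triple (e_1,e_2,e_l) in V, the real number R_{1 1̄ 1 1̄} + R_{2 2̄ 2 2̄} + R_{1 2̄ 1 2̄} + R_{2 1̄ 2 1̄} + 2(R_{1 1̄ l l̄} + R_{2 2̄ l l̄}) is at least 4φ. -/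
open MeasureTheory

/-- A Kähler curvature-type tensor on a complex vector space `V`: a map
`R : V × V × V × V → ℂ` that is `ℂ`-linear in the first and third arguments,
conjugate-linear in the second and fourth arguments, and satisfies the Kähler
symmetries `R(X,Y,Z,W) = R(Z,Y,X,W)`, `R(X,Y,Z,W) = R(X,W,Z,Y)` and
`conj (R(X,Y,Z,W)) = R(Y,X,W,Z)`. -/
structure IsKahlerCurvatureTensor {V : Type*} [AddCommGroup V] [Module ℂ V]
    (R : V → V → V → V → ℂ) : Prop where
  map_add₁ : ∀ x x' y z w, R (x + x') y z w = R x y z w + R x' y z w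
  map_smul₁ : ∀ (a : ℂ) (x y z w : V), R (a • x) y z w = a * R x y z w
  map_add₂ : ∀ x y y' z w, R x (y + y') z w = R x y z w + R x y' z w
  map_smul₂ : ∀ (a : ℂ) (x y z w : V), R x (a • y) z w = starRingEnd ℂ a * R x y z w
  map_add₃ : ∀ x y z z' w, R x y (z + z') w = R x y z w + R x y z' w
  map_smul₃ : ∀ (a : ℂ) (x y z w : V), R x y (a • z) w = a * R x y z w
  map_add₄ : ∀ x y z w w', R x y z (w + w') = R x y z w + R x y z w'
  map_smul₄ : ∀ (a : ℂ) (x y z w : V), R x y z (a • w) = starRingEnd ℂ a * R x y z w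
  symm₁₃ : ∀ x y z w, R x y z w = R z y x w
  symm₂₄ : ∀ x y z w, R x y z w = R x w z y
  conj_symm : ∀ x y z w, starRingEnd ℂ (R x y z w) = R y x w z
/-- **Inequality (eq:Ric4) in the proof of Theorem 1.** Let `V` be a complex inner
product space of dimension `n ≥ 3`, `R` a Kähler curvature-type tensor and `φ ∈ ℝ`.
If `Ric_3^⊥ ≥ φ` pointwise, then for every orthonormal triple `(e₁, e₂, e_l)`,
`R_{11̄11̄} + R_{22̄22̄} + R_{12̄12̄} + R_{21̄21̄} + 2(R_{11̄ll̄} + R_{22̄ll̄}) ≥ 4φ`. -/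
theorem Ric4_inequality
    {V : Type*} [NormedAddCommGroup V] [InnerProductSpace ℂ V] [FiniteDimensional ℂ V]
    (hn : 3 ≤ Module.finrank ℂ V)
    (R : V → V → V → V → ℂ) (hR : IsKahlerCurvatureTensor R) (φ : ℝ)
    (hRic : ∀ K : Submodule ℂ V, Module.finrank ℂ K = 3 →
      ∀ E : Fin 3 → V, Orthonormal ℂ E → (∀ j, E j ∈ K) →
      ∀ v ∈ K, ‖v‖ = 1 →
        φ ≤ ((∑ j : Fin 3, R v v (E j) (E j)) - R v v v v).re)
    (e : Fin 3 → V) (he : Orthonormal ℂ e) :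
    4 * φ ≤ (R (e 0) (e 0) (e 0) (e 0) + R (e 1) (e 1) (e 1) (e 1)
      + R (e 0) (e 1) (e 0) (e 1) + R (e 1) (e 0) (e 1) (e 0)
      + 2 * (R (e 0) (e 0) (e 2) (e 2) + R (e 1) (e 1) (e 2) (e 2))).re := by
  classical
  set s : ℂ := ((Real.sqrt 2 : ℝ) : ℂ)⁻¹ with hs_def
  have hsqrt2 : (Real.sqrt 2) ≠ 0 := by positivity
  have hcs : starRingEnd ℂ s = s := by
    rw [hs_def, map_inv₀, Complex.conj_ofReal]
  have hs2 : s * s = 1/2 := by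
    rw [hs_def, ← mul_inv, ← Complex.ofReal_mul, Real.mul_self_sqrt (by norm_num)]
    norm_num
  set K : Submodule ℂ V := Submodule.span ℂ (Set.range e) with hK_def
  have hK : Module.finrank ℂ K = 3 := by
    rw [hK_def, finrank_span_eq_card he.linearIndependent]
    simp
  have hmem : ∀ j, e j ∈ K := fun j => Submodule.subset_span ⟨j, rfl⟩
  have h01 : (inner ℂ (e 0) (e 1) : ℂ) = 0 := he.2 (by decide)
  have hvmem : ∀ t : ℂ, s • (e 0 + t • e 1) ∈ K := fun t =>
    K.smul_mem _ (K.add_mem (hmem 0) (K.smul_mem _ (hmem 1)))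
  have hvnorm : ∀ t : ℂ, ‖t‖ = 1 → ‖s • (e 0 + t • e 1)‖ = 1 := by
    intro t ht
    have hz : (inner ℂ (e 0) (t • e 1) : ℂ) = 0 := by
      rw [inner_smul_right, h01, mul_zero]
    have h2 : ‖e 0 + t • e 1‖ * ‖e 0 + t • e 1‖ = 2 := by
      rw [norm_add_sq_eq_norm_sq_add_norm_sq_of_inner_eq_zero _ _ hz, norm_smul, ht,
        he.1 0, he.1 1]
      norm_num
    have h2' : ‖e 0 + t • e 1‖ = Real.sqrt 2 := by
      rw [← h2, Real.sqrt_mul_self (norm_nonneg _)]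
    rw [norm_smul, h2', hs_def]
    rw [norm_inv, Complex.norm_real, Real.norm_eq_abs,
      abs_of_nonneg (Real.sqrt_nonneg 2), inv_mul_cancel₀ hsqrt2]
  have h1 := hRic K hK e he hmem (s • (e 0 + Complex.I • e 1)) (hvmem _)
    (hvnorm Complex.I (by simp))
  have h2 := hRic K hK e he hmem (s • (e 0 + (-Complex.I) • e 1)) (hvmem _)
    (hvnorm (-Complex.I) (by simp))
  have e1 : R (e 1) (e 1) (e 0) (e 0) = R (e 0) (e 0) (e 1) (e 1) := by
    rw [hR.symm₁₃ (e 1) (e 1) (e 0) (e 0), hR.symm₂₄ (e 0) (e 1) (e 1) (e 0)]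
  have e2 : R (e 0) (e 1) (e 1) (e 0) = R (e 0) (e 0) (e 1) (e 1) :=
    hR.symm₂₄ (e 0) (e 1) (e 1) (e 0)
  have e3 : R (e 1) (e 0) (e 0) (e 1) = R (e 0) (e 0) (e 1) (e 1) :=
    (hR.symm₂₄ (e 1) (e 0) (e 0) (e 1)).trans e1
  have key :
      2 * (((∑ j : Fin 3, R (s • (e 0 + Complex.I • e 1)) (s • (e 0 + Complex.I • e 1)) (e j) (e j)) -
          R (s • (e 0 + Complex.I • e 1)) (s • (e 0 + Complex.I • e 1)) (s • (e 0 + Complex.I • e 1)) (s • (e 0 + Complex.I • e 1)))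
        + ((∑ j : Fin 3, R (s • (e 0 + (-Complex.I) • e 1)) (s • (e 0 + (-Complex.I) • e 1)) (e j) (e j)) -
          R (s • (e 0 + (-Complex.I) • e 1)) (s • (e 0 + (-Complex.I) • e 1)) (s • (e 0 + (-Complex.I) • e 1)) (s • (e 0 + (-Complex.I) • e 1))))
      = (R (e 0) (e 0) (e 0) (e 0) + R (e 1) (e 1) (e 1) (e 1)
        + R (e 0) (e 1) (e 0) (e 1) + R (e 1) (e 0) (e 1) (e 0)
        + 2 * (R (e 0) (e 0) (e 2) (e 2) + R (e 1) (e 1) (e 2) (e 2))) := by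
    have hs2p : s ^ 2 = (1/2 : ℂ) := by rw [sq]; exact hs2
    have hI4 : Complex.I ^ 4 = 1 := by
      rw [(by norm_num : (4:ℕ) = 2*2), pow_mul, Complex.I_sq]; norm_num
    simp only [Fin.sum_univ_three, hR.map_add₁, hR.map_add₂, hR.map_add₃, hR.map_add₄,
      hR.map_smul₁, hR.map_smul₂, hR.map_smul₃, hR.map_smul₄, hcs, Complex.conj_I, map_neg,
      neg_neg]
    rw [e1, e2, e3]
    ring_nf
    rw [Complex.I_sq, hI4]
    linear_combination (-4*(s^2-1/2)*(R (e 0) (e 0) (e 0) (e 0))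
      - 16*s^2*R (e 0) (e 0) (e 1) (e 1)
      - 4*(s^2-1/2)*R (e 1) (e 1) (e 1) (e 1)
      + 4*(R (e 1) (e 1) (e 2) (e 2) + R (e 0) (e 0) (e 2) (e 2))
      + 4*(s^2+1/2)*(R (e 0) (e 1) (e 0) (e 1) + R (e 1) (e 0) (e 1) (e 0))) * hs2p
  rw [← key]
  simp only [Complex.mul_re, Complex.add_re, Complex.re_ofNat, Complex.im_ofNat, zero_mul,
    sub_zero]
  linarith [h1, h2]
end

section
/- Let V be a complex inner product space of dimension n ≥ 3, let R be a Kähler curvature-type tensor on V, and let φ ∈ ℝ. Assume that for every complex 3-dimensional subspace Σ ⊆ V, every orthonormal basis (E_1,E_2,E_3) of Σ, and every unit vector v ∈ Σ one has Σ_{j=1}^3 R(v,v̄,E_j,Ē_j) − R(v,v̄,v,v̄) ≥ φ. Then for every orthonormal triple (e_1,e_2,e_l) in V, the real number R_{1 1̄ 1 1̄} + R_{2 2̄ 2 2̄} + 2(R_{1 1̄ l l̄} + R_{2 2̄ l l̄}) is at least 4φ. -/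
open MeasureTheory

/-- **The averaged inequality of (eq:Ric3) and (eq:Ric4) in the proof of Theorem 1.**
Let `V` be a complex inner product space of dimension `n ≥ 3`, `R` a Kähler
curvature-type tensor and `φ ∈ ℝ`. If `Ric_3^⊥ ≥ φ` pointwise, then for every
orthonormal triple `(e₁, e₂, e_l)`,
`R_{11̄11̄} + R_{22̄22̄} + 2(R_{11̄ll̄} + R_{22̄ll̄}) ≥ 4φ`. -/
theorem Ric34_averaged_inequality
    {V : Type*} [NormedAddCommGroup V] [InnerProductSpace ℂ V] [FiniteDimensional ℂ V]
    (hn : 3 ≤ Module.finrank ℂ V)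
    (R : V → V → V → V → ℂ) (hR : IsKahlerCurvatureTensor R) (φ : ℝ)
    (hRic : ∀ K : Submodule ℂ V, Module.finrank ℂ K = 3 →
      ∀ E : Fin 3 → V, Orthonormal ℂ E → (∀ j, E j ∈ K) →
      ∀ v ∈ K, ‖v‖ = 1 →
        φ ≤ ((∑ j : Fin 3, R v v (E j) (E j)) - R v v v v).re)
    (e : Fin 3 → V) (he : Orthonormal ℂ e) :
    4 * φ ≤ (R (e 0) (e 0) (e 0) (e 0) + R (e 1) (e 1) (e 1) (e 1)
      + 2 * (R (e 0) (e 0) (e 2) (e 2) + R (e 1) (e 1) (e 2) (e 2))).re := by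
    classical
  -- notation
  have h01 : (inner ℂ (e 0) (e 1) : ℂ) = 0 := he.2 (by decide)
  set c : ℂ := ((((Real.sqrt 2):ℝ)⁻¹ : ℝ) : ℂ) with hcdef
  have hc_conj : starRingEnd ℂ c = c := Complex.conj_ofReal _
  have hc2 : c * c = 1 / 2 := by
    rw [hcdef, ← Complex.ofReal_mul, ← mul_inv, Real.mul_self_sqrt (by norm_num : (0:ℝ) ≤ 2)]
    norm_num
  -- the 3-dimensional subspace
  set K : Submodule ℂ V := Submodule.span ℂ (Set.range e) with hKdef
  have hK3 : Module.finrank ℂ K = 3 := by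
    rw [hKdef, finrank_span_eq_card he.linearIndependent, Fintype.card_fin]
  have hEK : ∀ j, e j ∈ K := fun j => Submodule.subset_span ⟨j, rfl⟩
  -- norm and membership of the averaged vectors
  have hmem : ∀ d : ℂ, c • e 0 + d • e 1 ∈ K := fun d =>
    K.add_mem (K.smul_mem c (hEK 0)) (K.smul_mem d (hEK 1))
  have hcnorm : ‖c‖ = (Real.sqrt 2)⁻¹ := by
    rw [hcdef, Complex.norm_real, Real.norm_eq_abs, abs_of_nonneg (by positivity)]
  have hnorm : ∀ d : ℂ, ‖d‖ = ‖c‖ → ‖c • e 0 + d • e 1‖ = 1 := by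
    intro d hd
    have hsq : ‖c • e 0 + d • e 1‖ ^ 2 = 1 := by
      rw [norm_add_sq (𝕜 := ℂ), inner_smul_left, inner_smul_right, h01, mul_zero, mul_zero]
      simp only [norm_smul, he.1, mul_one, hd, hcnorm, map_zero, mul_zero, add_zero]
      rw [inv_pow, Real.sq_sqrt (by norm_num : (0:ℝ) ≤ 2)]
      norm_num
    rw [← Real.sqrt_sq (norm_nonneg _), hsq, Real.sqrt_one]
  -- the four special inequalities
  have H : ∀ d : ℂ, ‖d‖ = ‖c‖ →
      φ ≤ ((∑ j : Fin 3, R (c • e 0 + d • e 1) (c • e 0 + d • e 1) (e j) (e j))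
        - R (c • e 0 + d • e 1) (c • e 0 + d • e 1) (c • e 0 + d • e 1) (c • e 0 + d • e 1)).re :=
    fun d hd => hRic K hK3 e he hEK _ (hmem d) (hnorm d hd)
  have H1 := H c rfl
  have H2 := H (-c) (by rw [norm_neg])
  have H3 := H (c * Complex.I) (by rw [norm_mul, Complex.norm_I, mul_one])
  have H4 := H (-(c * Complex.I)) (by rw [norm_neg, norm_mul, Complex.norm_I, mul_one])
  -- symmetry identities used for canonicalization
  have s1 : R (e 1) (e 1) (e 0) (e 0) = R (e 0) (e 0) (e 1) (e 1) :=
    (hR.symm₁₃ _ _ _ _).trans (hR.symm₂₄ _ _ _ _)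
  have s2 : R (e 1) (e 0) (e 0) (e 1) = R (e 0) (e 0) (e 1) (e 1) := hR.symm₁₃ _ _ _ _
  have s3 : R (e 0) (e 1) (e 1) (e 0) = R (e 0) (e 0) (e 1) (e 1) := hR.symm₂₄ _ _ _ _
  have s4 : R (e 1) (e 0) (e 0) (e 0) = R (e 0) (e 0) (e 1) (e 0) := hR.symm₁₃ _ _ _ _
  have s5 : R (e 0) (e 1) (e 0) (e 0) = R (e 0) (e 0) (e 0) (e 1) := hR.symm₂₄ _ _ _ _
  have s6 : R (e 1) (e 0) (e 1) (e 1) = R (e 1) (e 1) (e 1) (e 0) := hR.symm₂₄ _ _ _ _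
  have s7 : R (e 0) (e 1) (e 1) (e 1) = R (e 1) (e 1) (e 0) (e 1) := hR.symm₁₃ _ _ _ _
  -- the key algebraic identity: the four quantities sum to the target
  have key :
      ((∑ j : Fin 3, R (c • e 0 + c • e 1) (c • e 0 + c • e 1) (e j) (e j))
        - R (c • e 0 + c • e 1) (c • e 0 + c • e 1) (c • e 0 + c • e 1) (c • e 0 + c • e 1))
      + ((∑ j : Fin 3, R (c • e 0 + (-c) • e 1) (c • e 0 + (-c) • e 1) (e j) (e j))
        - R (c • e 0 + (-c) • e 1) (c • e 0 + (-c) • e 1) (c • e 0 + (-c) • e 1)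
            (c • e 0 + (-c) • e 1))
      + ((∑ j : Fin 3, R (c • e 0 + (c * Complex.I) • e 1) (c • e 0 + (c * Complex.I) • e 1)
            (e j) (e j))
        - R (c • e 0 + (c * Complex.I) • e 1) (c • e 0 + (c * Complex.I) • e 1)
            (c • e 0 + (c * Complex.I) • e 1) (c • e 0 + (c * Complex.I) • e 1))
      + ((∑ j : Fin 3, R (c • e 0 + (-(c * Complex.I)) • e 1) (c • e 0 + (-(c * Complex.I)) • e 1)
            (e j) (e j))
        - R (c • e 0 + (-(c * Complex.I)) • e 1) (c • e 0 + (-(c * Complex.I)) • e 1)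
            (c • e 0 + (-(c * Complex.I)) • e 1) (c • e 0 + (-(c * Complex.I)) • e 1))
      = R (e 0) (e 0) (e 0) (e 0) + R (e 1) (e 1) (e 1) (e 1)
        + 2 * (R (e 0) (e 0) (e 2) (e 2) + R (e 1) (e 1) (e 2) (e 2)) := by
    simp only [Fin.sum_univ_three, hR.map_add₁, hR.map_smul₁, hR.map_add₂, hR.map_smul₂,
      hR.map_add₃, hR.map_smul₃, hR.map_add₄, hR.map_smul₄, map_mul, map_neg, map_one,
      Complex.conj_I, hc_conj, s1, s2, s3, s4, s5, s6, s7]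
    linear_combination
      (-4*(c*c - 1/2)*(R (e 0) (e 0) (e 0) (e 0) + R (e 1) (e 1) (e 1) (e 1))
        + 4*R (e 0) (e 0) (e 2) (e 2) + 4*R (e 1) (e 1) (e 2) (e 2)
        - 16*(c*c)*R (e 0) (e 0) (e 1) (e 1)) * hc2
      + (-2*(c*c)*R (e 1) (e 1) (e 2) (e 2)
        - 2*(c*c)^2*(R (e 1) (e 0) (e 1) (e 0) + R (e 0) (e 1) (e 0) (e 1))
        + (-2*(c*c) - 2*(c*c)^2*(Complex.I*Complex.I - 1))*R (e 1) (e 1) (e 1) (e 1)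
        + (8*(c*c)^2 - 2*(c*c))*R (e 0) (e 0) (e 1) (e 1)) * Complex.I_mul_I
  have keyre := congrArg Complex.re key
  simp only [Complex.add_re] at keyre ⊢
  linarith [H1, H2, H3, H4]
end

section
/- Let V be a complex inner product space of dimension n ≥ 3, let R be a Kähler curvature-type tensor on V, and let φ ∈ ℝ. Assume that for every complex 3-dimensional subspace Σ ⊆ V, every orthonormal basis (E_1,E_2,E_3) of Σ, and every unit vector v ∈ Σ one has Σ_{j=1}^3 R(v,v̄,E_j,Ē_j) − R(v,v̄,v,v̄) ≥ φ. Then for every orthonormal triple (e_1,e_2,e_l) in V, the real number Σ_{i,j=1}^2 R_{i ī j j̄} + 3(R_{1 1̄ l l̄} + R_{2 2̄ l l̄}) is at least 6φ, where Σ_{i,j=1}^2 R_{i ī j j̄} = R_{1 1̄ 1 1̄} + R_{1 1̄ 2 2̄} + R_{2 2̄ 1 1̄} + R_{2 2̄ 2 2̄}. -/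
open MeasureTheory

/-- **The key intermediate inequality in case (2) of Theorem 1.** Let `V` be a
complex inner product space of dimension `n ≥ 3`, `R` a Kähler curvature-type
tensor and `φ ∈ ℝ`. If `Ric_3^⊥ ≥ φ` pointwise, then for every orthonormal triple
`(e₁, e₂, e_l)`,
`Σ_{i,j=1}^2 R_{iījj̄} + 3(R_{11̄ll̄} + R_{22̄ll̄}) ≥ 6φ`. -/
theorem Ric3perp_key_inequality
    {V : Type*} [NormedAddCommGroup V] [InnerProductSpace ℂ V] [FiniteDimensional ℂ V]
    (hn : 3 ≤ Module.finrank ℂ V)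
    (R : V → V → V → V → ℂ) (hR : IsKahlerCurvatureTensor R) (φ : ℝ)
    (hRic : ∀ K : Submodule ℂ V, Module.finrank ℂ K = 3 →
      ∀ E : Fin 3 → V, Orthonormal ℂ E → (∀ j, E j ∈ K) →
      ∀ v ∈ K, ‖v‖ = 1 →
        φ ≤ ((∑ j : Fin 3, R v v (E j) (E j)) - R v v v v).re)
    (e : Fin 3 → V) (he : Orthonormal ℂ e) :
    6 * φ ≤ (R (e 0) (e 0) (e 0) (e 0) + R (e 0) (e 0) (e 1) (e 1)
      + R (e 1) (e 1) (e 0) (e 0) + R (e 1) (e 1) (e 1) (e 1)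
      + 3 * (R (e 0) (e 0) (e 2) (e 2) + R (e 1) (e 1) (e 2) (e 2))).re := by

  classical
  -- the span of the orthonormal triple
  set K : Submodule ℂ V := Submodule.span ℂ (Set.range e) with hKdef
  have hKrank : Module.finrank ℂ K = 3 := by
    rw [hKdef, finrank_span_eq_card he.linearIndependent]
    simp
  have hmem : ∀ i, e i ∈ K := fun i => Submodule.subset_span ⟨i, rfl⟩
  have H : ∀ v ∈ K, ‖v‖ = 1 →
      φ ≤ ((∑ j : Fin 3, R v v (e j) (e j)) - R v v v v).re :=
    fun v hv hn => hRic K hKrank e he hmem v hv hn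
  -- the scalar 1/√2
  set s : ℂ := (((Real.sqrt 2)⁻¹ : ℝ) : ℂ) with hsdef
  have hsconj : starRingEnd ℂ s = s := Complex.conj_ofReal _
  have hs2 : s * s = 1 / 2 := by
    rw [hsdef]
    norm_cast
    rw [← mul_inv, Real.mul_self_sqrt (by norm_num)]
    norm_num
  -- smul lemmas
  have hRs2 : ∀ x y z w : V, R (s • x) (s • y) z w = (1/2) * R x y z w := by
    intro x y z w
    rw [hR.map_smul₁, hR.map_smul₂, hsconj, ← mul_assoc, hs2]
  have hRs4 : ∀ x y z w : V, R (s • x) (s • y) (s • z) (s • w)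
      = (1/4) * R x y z w := by
    intro x y z w
    rw [hRs2, hR.map_smul₃, hR.map_smul₄, hsconj]
    rw [show (1/2 : ℂ) * (s * (s * R x y z w)) = (s * s) * ((1/2) * R x y z w) by ring,
      hs2]
    ring
  have hnorm : ∀ a : ℂ, ‖a‖ = 1 → ‖s • (e 0 + a • e 1)‖ = 1 := by
    intro a ha
    have h01 : (inner ℂ (e 0) (a • e 1) : ℂ) = 0 := by
      rw [inner_smul_right, he.2 (show (0 : Fin 3) ≠ 1 by decide)]
      simp
    have hsq : ‖e 0 + a • e 1‖ ^ 2 = 2 := by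
      rw [@norm_add_sq ℂ _ _ _ _ (e 0) (a • e 1), h01, norm_smul, ha, he.1 0, he.1 1]
      norm_num
    have h2 : ‖e 0 + a • e 1‖ = Real.sqrt 2 := by
      rw [← Real.sqrt_sq (norm_nonneg _), hsq]
    rw [norm_smul, h2, hsdef]
    simp only [Complex.norm_real, Real.norm_eq_abs, abs_of_nonneg
      (inv_nonneg.mpr (Real.sqrt_nonneg 2))]
    rw [inv_mul_cancel₀ (by positivity)]
  have hvmem : ∀ a : ℂ, s • (e 0 + a • e 1) ∈ K := fun a =>
    K.smul_mem _ (K.add_mem (hmem 0) (K.smul_mem _ (hmem 1)))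
  -- the six inequalities
  have h0 := H (e 0) (hmem 0) (he.1 0)
  have h1 := H (e 1) (hmem 1) (he.1 1)
  have hA := H _ (hvmem 1) (hnorm 1 (by norm_num))
  have hB := H _ (hvmem Complex.I) (hnorm Complex.I (by simp))
  have hC := H _ (hvmem (-1)) (hnorm (-1) (by norm_num))
  have hD := H _ (hvmem (-Complex.I)) (hnorm (-Complex.I) (by simp))
  -- key complex identity: the sum of the six expressions equals the target
  have h24a : R (e 1) (e 0) (e 0) (e 1) = R (e 1) (e 1) (e 0) (e 0) :=
    (hR.symm₂₄ (e 1) (e 0) (e 0) (e 1)).symm ▸ hR.symm₂₄ (e 1) (e 1) (e 0) (e 0)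
  have h24b : R (e 0) (e 1) (e 1) (e 0) = R (e 0) (e 0) (e 1) (e 1) :=
    (hR.symm₂₄ (e 0) (e 1) (e 1) (e 0)).symm ▸ hR.symm₂₄ (e 0) (e 0) (e 1) (e 1)
  have hEq :
      ((∑ j : Fin 3, R (e 0) (e 0) (e j) (e j)) - R (e 0) (e 0) (e 0) (e 0))
      + ((∑ j : Fin 3, R (e 1) (e 1) (e j) (e j)) - R (e 1) (e 1) (e 1) (e 1))
      + (((∑ j : Fin 3, R (s • (e 0 + (1:ℂ) • e 1)) (s • (e 0 + (1:ℂ) • e 1)) (e j) (e j))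
          - R (s • (e 0 + (1:ℂ) • e 1)) (s • (e 0 + (1:ℂ) • e 1))
              (s • (e 0 + (1:ℂ) • e 1)) (s • (e 0 + (1:ℂ) • e 1)))
        + ((∑ j : Fin 3, R (s • (e 0 + Complex.I • e 1)) (s • (e 0 + Complex.I • e 1)) (e j) (e j))
          - R (s • (e 0 + Complex.I • e 1)) (s • (e 0 + Complex.I • e 1))
              (s • (e 0 + Complex.I • e 1)) (s • (e 0 + Complex.I • e 1)))
        + ((∑ j : Fin 3, R (s • (e 0 + (-1:ℂ) • e 1)) (s • (e 0 + (-1:ℂ) • e 1)) (e j) (e j))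
          - R (s • (e 0 + (-1:ℂ) • e 1)) (s • (e 0 + (-1:ℂ) • e 1))
              (s • (e 0 + (-1:ℂ) • e 1)) (s • (e 0 + (-1:ℂ) • e 1)))
        + ((∑ j : Fin 3, R (s • (e 0 + (-Complex.I) • e 1)) (s • (e 0 + (-Complex.I) • e 1)) (e j) (e j))
          - R (s • (e 0 + (-Complex.I) • e 1)) (s • (e 0 + (-Complex.I) • e 1))
              (s • (e 0 + (-Complex.I) • e 1)) (s • (e 0 + (-Complex.I) • e 1))))
      = (R (e 0) (e 0) (e 0) (e 0) + R (e 0) (e 0) (e 1) (e 1)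
        + R (e 1) (e 1) (e 0) (e 0) + R (e 1) (e 1) (e 1) (e 1)
        + 3 * (R (e 0) (e 0) (e 2) (e 2) + R (e 1) (e 1) (e 2) (e 2))) := by
    simp only [Fin.sum_univ_three]
    simp only [hRs4, hRs2]
    simp only [hR.map_add₁, hR.map_add₂, hR.map_add₃,
      hR.map_add₄, hR.map_smul₁, hR.map_smul₂, hR.map_smul₃, hR.map_smul₄,
      map_one, map_neg, Complex.conj_I, h24a, h24b]
    ring_nf
    simp only [Complex.I_sq, Complex.I_pow_four]
    ring
  have hre := congrArg Complex.re hEq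
  simp only [Fin.sum_univ_three, Complex.add_re, Complex.sub_re] at hre h0 h1 hA hB hC hD ⊢
  linarith
end

section
/- Let V be a complex inner product space of dimension n ≥ 3 with orthonormal basis (e_1,…,e_n), let R be a Kähler curvature-type tensor on V, and let φ ∈ ℝ. Assume that for every complex 3-dimensional subspace Σ ⊆ V, every orthonormal basis (E_1,E_2,E_3) of Σ, and every unit vector v ∈ Σ one has Σ_{j=1}^3 R(v,v̄,E_j,Ē_j) − R(v,v̄,v,v̄) ≥ φ. Define Ric(e_i,ē_i) = Σ_{j=1}^n R(e_i,ē_i,e_j,ē_j). Then (n−5)·Σ_{i,j=1}^2 R_{i ī j j̄} + 3·(Ric(e_1,ē_1) + Ric(e_2,ē_2)) ≥ 6(n−2)φ. -/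
open MeasureTheory

set_option maxHeartbeats 2000000 in
private lemma key_ineq
    {V : Type*} [NormedAddCommGroup V] [InnerProductSpace ℂ V]
    (R : V → V → V → V → ℂ) (hR : IsKahlerCurvatureTensor R) (φ : ℝ)
    (hRic : ∀ K : Submodule ℂ V, Module.finrank ℂ K = 3 →
      ∀ E : Fin 3 → V, Orthonormal ℂ E → (∀ j, E j ∈ K) →
      ∀ v ∈ K, ‖v‖ = 1 →
        φ ≤ ((∑ j : Fin 3, R v v (E j) (E j)) - R v v v v).re)
    (E : Fin 3 → V) (hE : Orthonormal ℂ E) :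
    6 * φ ≤ (R (E 0) (E 0) (E 0) (E 0) + R (E 0) (E 0) (E 1) (E 1)
      + R (E 1) (E 1) (E 0) (E 0) + R (E 1) (E 1) (E 1) (E 1)).re
      + 3 * ((R (E 0) (E 0) (E 2) (E 2)).re + (R (E 1) (E 1) (E 2) (E 2)).re) := by
  set K : Submodule ℂ V := Submodule.span ℂ (Set.range E) with hK
  have h3 : Module.finrank ℂ K = 3 := by
    rw [hK, finrank_span_eq_card hE.linearIndependent]; simp
  have memE : ∀ j, E j ∈ K := fun j => Submodule.subset_span ⟨j, rfl⟩
  have memv : ∀ (α β : ℂ), α • E 0 + β • E 1 ∈ K := fun α β =>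
    K.add_mem (K.smul_mem _ (memE 0)) (K.smul_mem _ (memE 1))
  have hEij := orthonormal_iff_ite.mp hE
  have norm1 : ∀ (α β : ℂ), Complex.normSq α + Complex.normSq β = 1 →
      ‖α • E 0 + β • E 1‖ = 1 := by
    intro α β h
    have hinner : (inner ℂ (α • E 0 + β • E 1) (α • E 0 + β • E 1) : ℂ)
        = Complex.normSq α + Complex.normSq β := by
      simp [inner_add_add_self, inner_smul_left, inner_smul_right, hEij,
        Complex.normSq_eq_conj_mul_self, -inner_self_eq_norm_sq_to_K]
      ring
    have h2 : (‖α • E 0 + β • E 1‖ : ℝ) ^ 2 = 1 := by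
      have h5 := inner_self_eq_norm_sq (𝕜 := ℂ) (α • E 0 + β • E 1)
      rw [hinner] at h5
      simp at h5
      linarith
    nlinarith [norm_nonneg (α • E 0 + β • E 1)]
  have ha := hRic K h3 E hE memE (E 0) (memE 0) (hE.1 0)
  have hb := hRic K h3 E hE memE (E 1) (memE 1) (hE.1 1)
  have hv1 := hRic K h3 E hE memE _ (memv ((3/5:ℝ):ℂ) ((4/5:ℝ):ℂ))
    (norm1 _ _ (by simp [Complex.normSq_ofReal]; norm_num))
  have hv2 := hRic K h3 E hE memE _ (memv ((3/5:ℝ):ℂ) (-((4/5:ℝ):ℂ)))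
    (norm1 _ _ (by simp [Complex.normSq_ofReal]; norm_num))
  have hv3 := hRic K h3 E hE memE _ (memv ((3/5:ℝ):ℂ) (((4/5:ℝ):ℂ)*Complex.I))
    (norm1 _ _ (by simp [Complex.normSq_ofReal, Complex.normSq_mul]; norm_num))
  have hv4 := hRic K h3 E hE memE _ (memv ((3/5:ℝ):ℂ) (-(((4/5:ℝ):ℂ)*Complex.I)))
    (norm1 _ _ (by simp [Complex.normSq_ofReal, Complex.normSq_mul]; norm_num))
  simp only [Fin.sum_univ_three, hR.map_add₁, hR.map_add₂, hR.map_add₃, hR.map_add₄,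
    hR.map_smul₁, hR.map_smul₂, hR.map_smul₃, hR.map_smul₄, map_mul, map_neg,
    Complex.conj_ofReal, Complex.conj_I] at ha hb hv1 hv2 hv3 hv4
  simp only [show R (E 0) (E 1) (E 1) (E 0) = R (E 1) (E 1) (E 0) (E 0) from
      hR.symm₁₃ _ _ _ _,
    show R (E 1) (E 0) (E 0) (E 1) = R (E 0) (E 0) (E 1) (E 1) from
      hR.symm₁₃ _ _ _ _] at hv1 hv2 hv3 hv4
  simp only [Complex.add_re, Complex.sub_re, Complex.mul_re, Complex.add_im,
    Complex.sub_im, Complex.mul_im, Complex.I_re, Complex.I_im, Complex.ofReal_re,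
    Complex.ofReal_im, Complex.neg_re, Complex.neg_im] at ha hb hv1 hv2 hv3 hv4 ⊢
  ring_nf at ha hb hv1 hv2 hv3 hv4
  linarith

/-- **The curvature estimate used in (eq:Ric5) in the proof of Theorem 1.** Let `V`
be a complex inner product space of dimension `n ≥ 3` with orthonormal basis
`(e₁, …, e_n)`, `R` a Kähler curvature-type tensor and `φ ∈ ℝ`. If `Ric_3^⊥ ≥ φ`
pointwise, then with `Ric(e_i, ē_i) = Σ_j R(e_i, ē_i, e_j, ē_j)`,
`(n − 5)·Σ_{i,j=1}^2 R_{iījj̄} + 3(Ric(e₁,ē₁) + Ric(e₂,ē₂)) ≥ 6(n − 2)φ`. -/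
theorem Ric5_curvature_estimate
    {V : Type*} [NormedAddCommGroup V] [InnerProductSpace ℂ V]
    (n : ℕ) (hn : 3 ≤ n) (e : OrthonormalBasis (Fin n) ℂ V)
    (R : V → V → V → V → ℂ) (hR : IsKahlerCurvatureTensor R) (φ : ℝ)
    (hRic : ∀ K : Submodule ℂ V, Module.finrank ℂ K = 3 →
      ∀ E : Fin 3 → V, Orthonormal ℂ E → (∀ j, E j ∈ K) →
      ∀ v ∈ K, ‖v‖ = 1 →
        φ ≤ ((∑ j : Fin 3, R v v (E j) (E j)) - R v v v v).re) :
    6 * ((n : ℝ) - 2) * φ ≤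
      ((n : ℝ) - 5) *
        (R (e ⟨0, by omega⟩) (e ⟨0, by omega⟩) (e ⟨0, by omega⟩) (e ⟨0, by omega⟩)
          + R (e ⟨0, by omega⟩) (e ⟨0, by omega⟩) (e ⟨1, by omega⟩) (e ⟨1, by omega⟩)
          + R (e ⟨1, by omega⟩) (e ⟨1, by omega⟩) (e ⟨0, by omega⟩) (e ⟨0, by omega⟩)
          + R (e ⟨1, by omega⟩) (e ⟨1, by omega⟩) (e ⟨1, by omega⟩) (e ⟨1, by omega⟩)).re
      + 3 * ((∑ j : Fin n, R (e ⟨0, by omega⟩) (e ⟨0, by omega⟩) (e j) (e j)).re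
          + (∑ j : Fin n, R (e ⟨1, by omega⟩) (e ⟨1, by omega⟩) (e j) (e j)).re) := by
  have h0 : (0:ℕ) < n := by omega
  have h1 : (1:ℕ) < n := by omega
  set i0 : Fin n := ⟨0, h0⟩ with hi0
  set i1 : Fin n := ⟨1, h1⟩ with hi1
  set a : V := e i0 with ha
  set b : V := e i1 with hb
  -- the per-l key inequality
  have key : ∀ l : Fin n, 2 ≤ (l:ℕ) →
      6 * φ ≤ (R a a a a + R a a b b + R b b a a + R b b b b).re
        + 3 * ((R a a (e l) (e l)).re + (R b b (e l) (e l)).re) := by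
    intro l hl
    have hf : Function.Injective ![i0, i1, l] := by
      intro x y hxy
      fin_cases x <;> fin_cases y <;> simp_all [Fin.ext_iff, hi0, hi1] <;> omega
    have hE : Orthonormal ℂ (e ∘ ![i0, i1, l]) := e.orthonormal.comp _ hf
    have h := key_ineq R hR φ hRic _ hE
    simpa using h
  set S : Finset (Fin n) := Finset.univ.filter (fun l => 2 ≤ (l:ℕ)) with hS
  have hi0S : i0 ∉ insert i1 S := by simp [hS, hi0, hi1, Fin.ext_iff]
  have hi1S : i1 ∉ S := by simp [hS, hi1]
  have huniv : (Finset.univ : Finset (Fin n)) = insert i0 (insert i1 S) := by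
    ext x
    simp [hS, hi0, hi1, Fin.ext_iff]
    omega
  have hcard : (S.card : ℝ) = (n : ℝ) - 2 := by
    have : (insert i0 (insert i1 S)).card = n := by
      rw [← huniv, Finset.card_univ, Fintype.card_fin]
    rw [Finset.card_insert_of_notMem hi0S, Finset.card_insert_of_notMem hi1S] at this
    have hn2 : S.card = n - 2 := by omega
    rw [hn2]
    push_cast [Nat.cast_sub (by omega : 2 ≤ n)]
    ring
  have hsum : (S.card : ℝ) * (6 * φ) ≤
      ∑ l ∈ S, ((R a a a a + R a a b b + R b b a a + R b b b b).re
        + 3 * ((R a a (e l) (e l)).re + (R b b (e l) (e l)).re)) := by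
    calc (S.card : ℝ) * (6 * φ) = ∑ _l ∈ S, 6 * φ := by
          rw [Finset.sum_const, nsmul_eq_mul]
      _ ≤ _ := Finset.sum_le_sum fun l hl => key l (by simpa [hS] using hl)
  rw [Finset.sum_add_distrib, Finset.sum_const, nsmul_eq_mul, ← Finset.mul_sum,
    Finset.sum_add_distrib, hcard] at hsum
  have split0 : (∑ j : Fin n, R a a (e j) (e j)).re
      = (R a a a a).re + (R a a b b).re + ∑ l ∈ S, (R a a (e l) (e l)).re := by
    rw [Complex.re_sum, huniv, Finset.sum_insert hi0S, Finset.sum_insert hi1S,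
      ← ha, ← hb]
    ring
  have split1 : (∑ j : Fin n, R b b (e j) (e j)).re
      = (R b b a a).re + (R b b b b).re + ∑ l ∈ S, (R b b (e l) (e l)).re := by
    rw [Complex.re_sum, huniv, Finset.sum_insert hi0S, Finset.sum_insert hi1S,
      ← ha, ← hb]
    ring
  rw [split0, split1]
  have hA : (R a a a a + R a a b b + R b b a a + R b b b b).re
      = (R a a a a).re + (R a a b b).re + (R b b a a).re + (R b b b b).re := by
    simp
  rw [hA] at hsum ⊢
  linarith [hsum]
end
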